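/- Let L_d : Q × Q → ℝ be a regular discrete Lagrangian (so the discrete Euler-Lagrange equations D₁L_d(q_k,q_{k+1}) + D₂L_d(q_{k-1},q_k) = 0 determine a unique q_{k+1} from (q_{k-1},q_k), giving the discrete flow F_{L_d}) and φ_d : Q → Q a diffeomorphism with L_d ∘ (φ_d × φ_d) = ±L_d. Then F_{L_d} ∘ (φ_d × φ_d) = (φ_d × φ_d) ∘ F_{L_d}, and consequently the set M_{φ_d} = {(q,q') : φ_d(q)=q, φ_d(q')=q'} is invariant under F_{L_d}. -/

import Mathlib

/-- The discrete Euler–Lagrange equations: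
`D₁L_d(q₁,q₂) + D₂L_d(q₀,q₁) = 0`. -/
noncomputable def DEL (n : ℕ) (Ld : (Fin n → ℝ) × (Fin n → ℝ) → ℝ)
    (q0 q1 q2 : Fin n → ℝ) : Prop :=
  fderiv ℝ (fun x => Ld (x, q2)) q1 + fderiv ℝ (fun y => Ld (q0, y)) q1 = 0

/-- For a regular discrete Lagrangian `L_d` (unique solvability of the DEL equations,
with discrete flow `F(q₀,q₁) = (q₁,q₂)`) and a diffeomorphism `φ_d` with
`L_d ∘ (φ_d × φ_d) = ±L_d`, the flow is `(φ_d × φ_d)`-equivariant, and consequently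
the fixed-point set `M_{φ_d} = {(q,q') : φ_d q = q, φ_d q' = q'}` is invariant
under the discrete flow. -/
theorem stmt_11 (n : ℕ) (Ld : (Fin n → ℝ) × (Fin n → ℝ) → ℝ)
    (hLd : Differentiable ℝ Ld)
    (φ ψ : (Fin n → ℝ) → (Fin n → ℝ))
    (hφ : Differentiable ℝ φ) (hψ : Differentiable ℝ ψ)
    (hlinv : ∀ x, ψ (φ x) = x) (hrinv : ∀ x, φ (ψ x) = x)
    (hsym : (∀ x y, Ld (φ x, φ y) = Ld (x, y)) ∨
            (∀ x y, Ld (φ x, φ y) = -Ld (x, y)))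
    (F : (Fin n → ℝ) × (Fin n → ℝ) → (Fin n → ℝ) × (Fin n → ℝ))
    (hF1 : ∀ z, (F z).1 = z.2)
    (hF2 : ∀ z, DEL n Ld z.1 z.2 (F z).2)
    (huniq : ∀ q0 q1 q2 q2' : Fin n → ℝ,
      DEL n Ld q0 q1 q2 → DEL n Ld q0 q1 q2' → q2 = q2') :
    (∀ z : (Fin n → ℝ) × (Fin n → ℝ),
      F (φ z.1, φ z.2) = (φ (F z).1, φ (F z).2)) ∧
    (∀ z : (Fin n → ℝ) × (Fin n → ℝ), φ z.1 = z.1 → φ z.2 = z.2 →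
      φ (F z).1 = (F z).1 ∧ φ (F z).2 = (F z).2) := by
  obtain ⟨ε, hε⟩ : ∃ ε : ℝ, ∀ x y, Ld (φ x, φ y) = ε * Ld (x, y) := by
    rcases hsym with h | h
    · exact ⟨1, fun x y => by rw [h]; ring⟩
    · exact ⟨-1, fun x y => by rw [h]; ring⟩
  have hd1 : ∀ c q : Fin n → ℝ, DifferentiableAt ℝ (fun x => Ld (x, c)) q :=
    fun c q => (hLd (q, c)).comp q (differentiableAt_id.prodMk (differentiableAt_const c))
  have hd2 : ∀ c q : Fin n → ℝ, DifferentiableAt ℝ (fun y => Ld (c, y)) q :=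
    fun c q => (hLd (c, q)).comp q ((differentiableAt_const c).prodMk differentiableAt_id)
  have key : ∀ q0 q1 q2, DEL n Ld q0 q1 q2 → DEL n Ld (φ q0) (φ q1) (φ q2) := by
    intro q0 q1 q2 hdel
    unfold DEL at hdel ⊢
    set D := fderiv ℝ φ q1 with hD
    set D' := fderiv ℝ ψ (φ q1) with hD'
    have hDD' : D.comp D' = ContinuousLinearMap.id ℝ _ := by
      have h1 : (φ ∘ ψ) = id := funext hrinv
      have h2 : fderiv ℝ (φ ∘ ψ) (φ q1)
          = (fderiv ℝ φ (ψ (φ q1))).comp (fderiv ℝ ψ (φ q1)) :=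
        fderiv_comp (x := φ q1) (hφ _) (hψ _)
      rw [h1, hlinv q1] at h2
      rw [hD, hD', ← h2, fderiv_id]
    have hA : (fderiv ℝ (fun x => Ld (x, φ q2)) (φ q1)).comp D
        = ε • fderiv ℝ (fun x => Ld (x, q2)) q1 := by
      have e1 : ((fun x => Ld (x, φ q2)) ∘ φ) = fun x => ε * Ld (x, q2) :=
        funext fun x => hε x q2
      have := (fderiv_comp (x := q1) (hd1 (φ q2) (φ q1)) (hφ q1)).symm
      rw [e1] at this
      rw [this, fderiv_const_mul (hd1 q2 q1) ε]
    have hB : (fderiv ℝ (fun y => Ld (φ q0, y)) (φ q1)).comp D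
        = ε • fderiv ℝ (fun y => Ld (q0, y)) q1 := by
      have e1 : ((fun y => Ld (φ q0, y)) ∘ φ) = fun y => ε * Ld (q0, y) :=
        funext fun y => hε q0 y
      have := (fderiv_comp (x := q1) (hd2 (φ q0) (φ q1)) (hφ q1)).symm
      rw [e1] at this
      rw [this, fderiv_const_mul (hd2 q0 q1) ε]
    have hsum : ((fderiv ℝ (fun x => Ld (x, φ q2)) (φ q1))
        + (fderiv ℝ (fun y => Ld (φ q0, y)) (φ q1))).comp D = 0 := by
      rw [ContinuousLinearMap.add_comp, hA, hB, ← smul_add, hdel, smul_zero]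
    calc fderiv ℝ (fun x => Ld (x, φ q2)) (φ q1)
          + fderiv ℝ (fun y => Ld (φ q0, y)) (φ q1)
        = ((fderiv ℝ (fun x => Ld (x, φ q2)) (φ q1)
          + fderiv ℝ (fun y => Ld (φ q0, y)) (φ q1)).comp D).comp D' := by
          rw [ContinuousLinearMap.comp_assoc, hDD', ContinuousLinearMap.comp_id]
      _ = 0 := by rw [hsum, ContinuousLinearMap.zero_comp]
  have equiv : ∀ z : (Fin n → ℝ) × (Fin n → ℝ),
      F (φ z.1, φ z.2) = (φ (F z).1, φ (F z).2) := by
    intro z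
    have h1 : (F (φ z.1, φ z.2)).1 = φ z.2 := hF1 _
    have h2 : DEL n Ld (φ z.1) (φ z.2) (F (φ z.1, φ z.2)).2 := hF2 (φ z.1, φ z.2)
    have h3 : DEL n Ld (φ z.1) (φ z.2) (φ (F z).2) := key z.1 z.2 (F z).2 (hF2 z)
    have h4 : (F (φ z.1, φ z.2)).2 = φ (F z).2 := huniq _ _ _ _ h2 h3
    have h5 : φ (F z).1 = φ z.2 := by rw [hF1 z]
    exact Prod.ext (by rw [h1, h5]) h4
  refine ⟨equiv, fun z hz1 hz2 => ?_⟩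
  have := equiv z
  rw [hz1, hz2] at this
  exact ⟨(congrArg Prod.fst this).symm, (congrArg Prod.snd this).symm⟩
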